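/- If F is an irredundant family of intervals and F ∪ {g} is redundant for an interval g ∉ F, then there exists f ∈ F with f ≠ g such that (F ∪ {g}) \ {f} is irredundant. -/

import Mathlib

open scoped Classical

/-- A finite family of sets is irredundant if its members can be arranged in a
sequence such that each set contains a point not in any of the preceding sets. -/
def Irredundant (F : Finset (Set ℤ)) : Prop :=
  ∃ l : List (Set ℤ), l.Nodup ∧ l.toFinset = F ∧
    ∀ i : Fin l.length, ∃ x ∈ l.get i, ∀ j : Fin l.length, j < i → x ∉ l.get j

/-- An interval is a nonempty half-open integer interval `[a,b)`. -/
def IsItv (s : Set ℤ) : Prop := ∃ a b : ℤ, a < b ∧ s = Set.Ico a b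

/-- `F|s`: the members of `F` contained in `s`. -/
noncomputable def Res (F : Finset (Set ℤ)) (s : Set ℤ) : Finset (Set ℤ) :=
  F.filter (fun f => f ⊆ s)

/-- `N_x F`: the number of members of `F` containing `x`. -/
noncomputable def Nx (F : Finset (Set ℤ)) (x : ℤ) : ℕ :=
  (F.filter (fun f => x ∈ f)).card

namespace IrrAux

/-- Recursive/inductive characterization of irredundant families. -/
inductive IR : Finset (Set ℤ) → Prop
  | empty : IR ∅
  | step (f : Set ℤ) (x : ℤ) (F : Finset (Set ℤ)) : f ∉ F → x ∈ f →
      (∀ h ∈ F, x ∉ h) → IR F → IR (insert f F)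

theorem irredundant_of_IR {F : Finset (Set ℤ)} (h : IR F) : Irredundant F := by
  induction h with
  | empty => exact ⟨[], by simp, by simp, fun i => absurd i.2 (by simp)⟩
  | step f x F hf hx havoid hIR ih =>
    obtain ⟨l, hnd, htf, hw⟩ := ih
    have hfl : f ∉ l := by
      intro hc
      exact hf (htf ▸ List.mem_toFinset.mpr hc)
    refine ⟨l ++ [f], ?_, ?_, ?_⟩
    · simp [List.nodup_append, hnd, hfl]
      exact fun a ha hc => hfl (hc ▸ ha)
    · simp [List.toFinset_append, htf]
    · intro i
      rcases lt_or_ge i.val l.length with hi | hi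
      · obtain ⟨y, hy, hy2⟩ := hw ⟨i.val, hi⟩
        refine ⟨y, ?_, ?_⟩
        · simpa [List.get_eq_getElem, List.getElem_append_left hi] using hy
        · intro j hj
          have hjl : j.val < l.length := Nat.lt_trans hj hi
          have := hy2 ⟨j.val, hjl⟩ hj
          simpa [List.get_eq_getElem, List.getElem_append_left hjl] using this
      · have hieq : i.val = l.length := by
          have := i.2; simp at this; omega
        refine ⟨x, ?_, ?_⟩
        · have : (l ++ [f])[i.val] = f := by
            rw [List.getElem_append_right (by omega)]
            simp [hieq]
          simpa [List.get_eq_getElem] using this.symm ▸ hx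
        · intro j hj
          have hjlt' : j.val < i.val := hj
          have hjl : j.val < l.length := by omega
          have hmem : l.get ⟨j.val, hjl⟩ ∈ F := by
            rw [← htf]
            exact List.mem_toFinset.mpr (List.get_mem l ⟨j.val, hjl⟩)
          have hx' := havoid _ hmem
          simpa [List.get_eq_getElem, List.getElem_append_left hjl] using hx'

theorem IR_of_irredundant {F : Finset (Set ℤ)} (h : Irredundant F) : IR F := by
  obtain ⟨l, hnd, htf, hw⟩ := h
  subst htf
  induction l using List.reverseRecOn with
  | nil => simpa using IR.empty
  | append_singleton l₀ f ih =>
    have hnd₀ : l₀.Nodup := (List.nodup_append.mp hnd).1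
    have hfl₀ : f ∉ l₀ := by
      have hd := (List.nodup_append.mp hnd).2.2
      intro hc
      exact hd f hc f (by simp) rfl
    have hlen : (l₀ ++ [f]).length = l₀.length + 1 := by simp
    -- witness at last position
    have hlast : (l₀.length : ℕ) < (l₀ ++ [f]).length := by simp
    obtain ⟨x, hx, hx2⟩ := hw ⟨l₀.length, hlast⟩
    have hxf : x ∈ f := by
      simpa [List.get_eq_getElem] using hx
    have havoid : ∀ h ∈ l₀.toFinset, x ∉ h := by
      intro h hh
      obtain ⟨j, hj, rfl⟩ := List.mem_iff_get.mp (List.mem_toFinset.mp hh)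
      have hjlt : (j : ℕ) < (l₀ ++ [f]).length := by
        have := j.2; simp
      have := hx2 ⟨j, hjlt⟩ (by
        show (j : ℕ) < l₀.length
        exact j.2)
      simpa [List.get_eq_getElem, List.getElem_append_left j.2] using this
    have hIR₀ : IR l₀.toFinset := by
      apply ih hnd₀
      intro i
      have hilt : (i : ℕ) < (l₀ ++ [f]).length := by have := i.2; simp
      obtain ⟨y, hy, hy2⟩ := hw ⟨i, hilt⟩
      refine ⟨y, ?_, ?_⟩
      · simpa [List.get_eq_getElem, List.getElem_append_left i.2] using hy
      · intro j hj
        have hjlt : (j : ℕ) < (l₀ ++ [f]).length := by have := j.2; simp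
        have := hy2 ⟨j, hjlt⟩ (by exact hj)
        simpa [List.get_eq_getElem, List.getElem_append_left j.2] using this
    have : IR (insert f l₀.toFinset) :=
      IR.step f x l₀.toFinset (fun hc => hfl₀ (List.mem_toFinset.mp hc)) hxf
        (fun h hh => havoid h hh) hIR₀
    have he : (l₀ ++ [f]).toFinset = insert f l₀.toFinset := by
      simp [List.toFinset_append]
    rw [he]
    exact this

end IrrAux

namespace IrrAux

/-- `Once H t`: some member of `H` inside `t` has a point covered by no other member of `H`
inside `t`. -/
def Once (H : Finset (Set ℤ)) (t : Set ℤ) : Prop :=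
  ∃ k ∈ H, k ⊆ t ∧ ∃ y ∈ k, ∀ h ∈ H, h ⊆ t → y ∈ h → h = k

/-- The criterion: every nonempty restriction has a once-covered point. -/
def Crit (H : Finset (Set ℤ)) : Prop :=
  ∀ a b : ℤ, a < b → (∃ h ∈ H, h ⊆ Set.Ico a b) → Once H (Set.Ico a b)

theorem IR_subset {F G : Finset (Set ℤ)} (h : IR F) (hGF : G ⊆ F) : IR G := by
  induction h generalizing G with
  | empty =>
    have : G = ∅ := Finset.subset_empty.mp hGF
    simpa [this] using IR.empty
  | step f x F hf hx havoid hIR ih =>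
    by_cases hfG : f ∈ G
    · have h1 : G.erase f ⊆ F := by
        intro h hh
        have h2 := Finset.mem_erase.mp hh
        rcases Finset.mem_insert.mp (hGF h2.2) with h3 | h3
        · exact absurd h3 h2.1
        · exact h3
      have h4 : IR (G.erase f) := ih h1
      have h5 : IR (insert f (G.erase f)) :=
        IR.step f x _ (Finset.notMem_erase f G) hx (fun h hh => havoid h (h1 hh)) h4
      rwa [Finset.insert_erase hfG] at h5
    · refine ih ?_
      intro h hh
      rcases Finset.mem_insert.mp (hGF hh) with h3 | h3
      · exact absurd (h3 ▸ hh) hfG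
      · exact h3

theorem IR_private {G : Finset (Set ℤ)} (h : IR G) (hne : G.Nonempty) :
    ∃ f ∈ G, ∃ x ∈ f, ∀ h' ∈ G, h' ≠ f → x ∉ h' := by
  cases h with
  | empty => exact absurd hne (by simp)
  | step f x F hf hx havoid hIR =>
    refine ⟨f, Finset.mem_insert_self f F, x, hx, ?_⟩
    intro h' hh' hne'
    rcases Finset.mem_insert.mp hh' with h3 | h3
    · exact absurd h3 hne'
    · exact havoid h' h3

theorem crit_of_IR {F : Finset (Set ℤ)} (h : IR F) : Crit F := by
  intro a b hab ⟨h₀, hh₀, hsub₀⟩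
  set t := Set.Ico a b with ht
  set G := F.filter (fun h => h ⊆ t) with hG
  have hGF : G ⊆ F := Finset.filter_subset _ _
  have hIRG : IR G := IR_subset h hGF
  have hne : G.Nonempty := ⟨h₀, Finset.mem_filter.mpr ⟨hh₀, hsub₀⟩⟩
  obtain ⟨f, hfG, x, hx, hpriv⟩ := IR_private hIRG hne
  have hfG' := Finset.mem_filter.mp hfG
  refine ⟨f, hfG'.1, hfG'.2, x, hx, ?_⟩
  intro h' hh' hsub' hxh'
  by_contra hne'
  exact hpriv h' (Finset.mem_filter.mpr ⟨hh', hsub'⟩) hne' hxh'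

theorem itv_nonempty {s : Set ℤ} (h : IsItv s) : s.Nonempty := by
  obtain ⟨a, b, hab, rfl⟩ := h
  exact Set.nonempty_Ico.mpr hab

/-- An interval inside `[a,b)` avoiding `x` but containing `y < x` lies in `[a,x)`. -/
theorem itv_left {h : Set ℤ} (hitv : IsItv h) {a b x y : ℤ}
    (hsub : h ⊆ Set.Ico a b) (hx : x ∉ h) (hy : y ∈ h) (hlt : y < x) :
    h ⊆ Set.Ico a x := by
  obtain ⟨α, β, hαβ, rfl⟩ := hitv
  have h1 : a ≤ α ∧ β ≤ b := (Set.Ico_subset_Ico_iff hαβ).mp hsub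
  have hy' := Set.mem_Ico.mp hy
  have hβx : β ≤ x := by
    by_contra hc
    exact hx (Set.mem_Ico.mpr ⟨by omega, by omega⟩)
  exact Set.Ico_subset_Ico h1.1 hβx

theorem itv_right {h : Set ℤ} (hitv : IsItv h) {a b x y : ℤ}
    (hsub : h ⊆ Set.Ico a b) (hx : x ∉ h) (hy : y ∈ h) (hlt : x < y) :
    h ⊆ Set.Ico (x + 1) b := by
  obtain ⟨α, β, hαβ, rfl⟩ := hitv
  have h1 : a ≤ α ∧ β ≤ b := (Set.Ico_subset_Ico_iff hαβ).mp hsub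
  have hy' := Set.mem_Ico.mp hy
  have hαx : x + 1 ≤ α := by
    by_contra hc
    exact hx (Set.mem_Ico.mpr ⟨by omega, by omega⟩)
  exact Set.Ico_subset_Ico hαx h1.2

/-- Peeling lemma: removing a member with a globally private point preserves the criterion. -/
theorem peel {H : Finset (Set ℤ)} (hitv : ∀ h ∈ H, IsItv h) (hcrit : Crit H)
    {f : Set ℤ} {x : ℤ} (hf : f ∈ H) (hx : x ∈ f)
    (huniq : ∀ h ∈ H, x ∈ h → h = f) : Crit (H.erase f) := by
  intro a b hab ⟨w₀, hw₀, hw₀sub⟩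
  set t := Set.Ico a b with ht
  have hw₀H : w₀ ∈ H := Finset.mem_of_mem_erase hw₀
  have hw₀f : w₀ ≠ f := Finset.ne_of_mem_erase hw₀
  by_cases hft : f ⊆ t
  · -- f inside t : split at x
    have hxw₀ : x ∉ w₀ := fun hc => hw₀f (huniq w₀ hw₀H hc)
    obtain ⟨α, β, hαβ, hw₀eq⟩ := hitv w₀ hw₀H
    have hxab : x ∈ t := hft hx
    have hxab' := Set.mem_Ico.mp hxab
    have hbounds : a ≤ α ∧ β ≤ b := by
      rw [hw₀eq] at hw₀sub
      exact (Set.Ico_subset_Ico_iff hαβ).mp hw₀sub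
    have hxcase : β ≤ x ∨ x < α := by
      by_contra hc
      push_neg at hc
      exact hxw₀ (hw₀eq ▸ Set.mem_Ico.mpr ⟨by omega, by omega⟩)
    rcases hxcase with hcase | hcase
    · -- w₀ is to the left of x; work in σ = Ico a x
      have hax : a < x := by omega
      have hw₀σ : w₀ ⊆ Set.Ico a x := by
        rw [hw₀eq]; exact Set.Ico_subset_Ico hbounds.1 hcase
      obtain ⟨k, hkH, hkσ, y, hy, huniqσ⟩ := hcrit a x hax ⟨w₀, hw₀H, hw₀σ⟩
      have hyx : y < x := (Set.mem_Ico.mp (hkσ hy)).2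
      have hkf : k ≠ f := by
        intro hc
        have : x ∈ Set.Ico a x := hkσ (hc ▸ hx)
        simp at this
      refine ⟨k, Finset.mem_erase.mpr ⟨hkf, hkH⟩,
        subset_trans hkσ (Set.Ico_subset_Ico le_rfl (by omega)), y, hy, ?_⟩
      intro h' hh' hsub' hyh'
      have hh'H := Finset.mem_of_mem_erase hh'
      have hh'f := Finset.ne_of_mem_erase hh'
      have hxh' : x ∉ h' := fun hc => hh'f (huniq h' hh'H hc)
      have : h' ⊆ Set.Ico a x := itv_left (hitv h' hh'H) hsub' hxh' hyh' hyx
      exact huniqσ h' hh'H this hyh'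
    · -- w₀ is to the right of x; work in σ = Ico (x+1) b
      have hxb : x + 1 < b := by omega
      have hw₀σ : w₀ ⊆ Set.Ico (x + 1) b := by
        rw [hw₀eq]; exact Set.Ico_subset_Ico (by omega) hbounds.2
      obtain ⟨k, hkH, hkσ, y, hy, huniqσ⟩ := hcrit (x + 1) b hxb ⟨w₀, hw₀H, hw₀σ⟩
      have hyx : x < y := by
        have := (Set.mem_Ico.mp (hkσ hy)).1; omega
      have hkf : k ≠ f := by
        intro hc
        have : x ∈ Set.Ico (x + 1) b := hkσ (hc ▸ hx)
        have := (Set.mem_Ico.mp this).1; omega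
      refine ⟨k, Finset.mem_erase.mpr ⟨hkf, hkH⟩,
        subset_trans hkσ (Set.Ico_subset_Ico (by omega) le_rfl), y, hy, ?_⟩
      intro h' hh' hsub' hyh'
      have hh'H := Finset.mem_of_mem_erase hh'
      have hh'f := Finset.ne_of_mem_erase hh'
      have hxh' : x ∉ h' := fun hc => hh'f (huniq h' hh'H hc)
      have : h' ⊆ Set.Ico (x + 1) b := itv_right (hitv h' hh'H) hsub' hxh' hyh' hyx
      exact huniqσ h' hh'H this hyh'
  · -- f not inside t
    obtain ⟨k, hkH, hkt, y, hy, huniqt⟩ := hcrit a b hab ⟨w₀, hw₀H, hw₀sub⟩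
    have hkf : k ≠ f := fun hc => hft (hc ▸ hkt)
    exact ⟨k, Finset.mem_erase.mpr ⟨hkf, hkH⟩, hkt, y, hy,
      fun h' hh' hsub' hyh' => huniqt h' (Finset.mem_of_mem_erase hh') hsub' hyh'⟩

/-- Every nonempty finite family of intervals fits in a common interval. -/
theorem hull {H : Finset (Set ℤ)} (hne : H.Nonempty) (hitv : ∀ h ∈ H, IsItv h) :
    ∃ A B : ℤ, A < B ∧ ∀ h ∈ H, h ⊆ Set.Ico A B := by
  classical
  induction H using Finset.induction_on with
  | empty => exact absurd hne (by simp)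
  | @insert h₀ H' hh₀ ih =>
    obtain ⟨α, β, hαβ, hh₀eq⟩ := hitv h₀ (Finset.mem_insert_self _ _)
    by_cases hH' : H'.Nonempty
    · obtain ⟨A, B, hAB, hsub⟩ := ih hH' (fun h hh => hitv h (Finset.mem_insert_of_mem hh))
      refine ⟨min A α, max B β, by omega, ?_⟩
      intro h hh
      rcases Finset.mem_insert.mp hh with rfl | hh'
      · rw [hh₀eq]
        exact Set.Ico_subset_Ico (min_le_right _ _) (le_max_right _ _)
      · exact subset_trans (hsub h hh')
          (Set.Ico_subset_Ico (min_le_left _ _) (le_max_left _ _))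
    · have : H' = ∅ := Finset.not_nonempty_iff_eq_empty.mp hH'
      subst this
      refine ⟨α, β, hαβ, ?_⟩
      intro h hh
      simp at hh
      subst hh
      rw [hh₀eq]

end IrrAux

namespace IrrAux

/-- Sufficiency: the criterion implies irredundance (for families of intervals). -/
theorem IR_of_crit : ∀ (H : Finset (Set ℤ)), (∀ h ∈ H, IsItv h) → Crit H → IR H := by
  intro H
  induction H using Finset.strongInductionOn with
  | _ H ih =>
    intro hitv hcrit
    rcases Finset.eq_empty_or_nonempty H with rfl | hne
    · exact IR.empty
    · obtain ⟨A, B, hAB, hsub⟩ := hull hne hitv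
      obtain ⟨h₀, hh₀⟩ := hne
      obtain ⟨f, hfH, _, x, hx, huniqU⟩ := hcrit A B hAB ⟨h₀, hh₀, hsub h₀ hh₀⟩
      have huniq : ∀ h ∈ H, x ∈ h → h = f := fun h hh hxh => huniqU h hh (hsub h hh) hxh
      have hcrit' : Crit (H.erase f) := peel hitv hcrit hfH hx huniq
      have hIR' : IR (H.erase f) :=
        ih (H.erase f) (Finset.erase_ssubset hfH)
          (fun h hh => hitv h (Finset.mem_of_mem_erase hh)) hcrit'
      have h5 : IR (insert f (H.erase f)) :=
        IR.step f x _ (Finset.notMem_erase f H) hx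
          (fun h hh => fun hc =>
            (Finset.ne_of_mem_erase hh) (huniq h (Finset.mem_of_mem_erase hh) hc)) hIR'
      rwa [Finset.insert_erase hfH] at h5

/-- A bad interval for the family `E`. -/
def Bad (E : Finset (Set ℤ)) (a b : ℤ) : Prop :=
  a < b ∧ (∃ h ∈ E, h ⊆ Set.Ico a b) ∧ ¬ Once E (Set.Ico a b)

/-- Every bad interval of `insert g F` contains `g` (when `F` satisfies the criterion). -/
theorem bad_contains_g {F : Finset (Set ℤ)} {g : Set ℤ} (hcritF : Crit F)
    {a b : ℤ} (hbad : Bad (insert g F) a b) : g ⊆ Set.Ico a b := by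
  obtain ⟨hab, ⟨h₀, hh₀, hsub₀⟩, hnone⟩ := hbad
  by_contra hng
  have hh₀F : h₀ ∈ F := by
    rcases Finset.mem_insert.mp hh₀ with rfl | h
    · exact absurd hsub₀ hng
    · exact h
  obtain ⟨k, hkF, hks, y, hy, hu⟩ := hcritF a b hab ⟨h₀, hh₀F, hsub₀⟩
  refine hnone ⟨k, Finset.mem_insert_of_mem hkF, hks, y, hy, ?_⟩
  intro h hh hs hyh
  rcases Finset.mem_insert.mp hh with rfl | hhF
  · exact absurd hs hng
  · exact hu h hhF hs hyh

/-- In a bad interval, every point of `g` is covered by some member of `F` inside it. -/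
theorem bad_cover {F : Finset (Set ℤ)} {g : Set ℤ} (hcritF : Crit F) (hgF : g ∉ F)
    {a b : ℤ} (hbad : Bad (insert g F) a b) {z : ℤ} (hz : z ∈ g) :
    ∃ f' ∈ F, f' ⊆ Set.Ico a b ∧ z ∈ f' := by
  have hgt : g ⊆ Set.Ico a b := bad_contains_g hcritF hbad
  by_contra hno
  push_neg at hno
  refine hbad.2.2 ⟨g, Finset.mem_insert_self _ _, hgt, z, hz, ?_⟩
  intro h hh hs hzh
  rcases Finset.mem_insert.mp hh with rfl | hhF
  · rfl
  · exact absurd hzh (hno h hhF hs)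

end IrrAux

namespace IrrAux

/-- Key existence lemma: there is a point `z ∈ g` and a member `f ∈ F` such that in every
bad interval of `insert g F`, `f` is the unique member of `F` inside it containing `z`. -/
theorem exists_pivot (g : Set ℤ) (hg : IsItv g) :
    ∀ F : Finset (Set ℤ), (∀ f ∈ F, IsItv f) → g ∉ F → IR F →
      (∃ a b : ℤ, Bad (insert g F) a b) →
      ∃ z f, z ∈ g ∧ f ∈ F ∧ ∀ a b : ℤ, Bad (insert g F) a b →
        (f ⊆ Set.Ico a b ∧ z ∈ f ∧
          ∀ h ∈ F, h ⊆ Set.Ico a b → z ∈ h → h = f) := by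
  intro F
  induction F using Finset.strongInductionOn with
  | _ F ih =>
    intro hitvF hgF hIRF hexbad
    set E := insert g F with hE
    have hitvE : ∀ h ∈ E, IsItv h := by
      intro h hh
      rcases Finset.mem_insert.mp hh with rfl | hhF
      · exact hg
      · exact hitvF h hhF
    have hcritF : Crit F := crit_of_IR hIRF
    have hEne : E.Nonempty := ⟨g, Finset.mem_insert_self _ _⟩
    obtain ⟨A, B, hAB, hsub⟩ := hull hEne hitvE
    -- F is nonempty
    have hFne : F.Nonempty := by
      rcases Finset.eq_empty_or_nonempty F with rfl | h
      · obtain ⟨a, b, hbad⟩ := hexbad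
        obtain ⟨z₀, hz₀⟩ := itv_nonempty hg
        have hgt : g ⊆ Set.Ico a b := bad_contains_g hcritF hbad
        exact absurd ⟨g, Finset.mem_insert_self _ _, hgt, z₀, hz₀, by
          intro h hh hs hzh
          rcases Finset.mem_insert.mp hh with rfl | hhF
          · rfl
          · exact absurd hhF (by simp)⟩ hbad.2.2
      · exact h
    by_cases honceU : Once E (Set.Ico A B)
    · -- the hull has a once-covered point z_U with unique global coverer k
      obtain ⟨k, hkE, _, zU, hzU, huniqU⟩ := honceU
      have huniqG : ∀ h ∈ E, zU ∈ h → h = k := fun h hh hz =>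
        huniqU h hh (hsub h hh) hz
      obtain ⟨a₀, b₀, hbad₀⟩ := hexbad
      have hzUg : zU ∉ g := by
        intro hzUg
        obtain ⟨f', hf'F, _, hzf'⟩ := bad_cover hcritF hgF hbad₀ hzUg
        have h1 : f' = k := huniqG f' (Finset.mem_insert_of_mem hf'F) hzf'
        have h2 : g = k := huniqG g (Finset.mem_insert_self _ _) hzUg
        exact hgF ((h2.trans h1.symm) ▸ hf'F)
      have hkF : k ∈ F := by
        rcases Finset.mem_insert.mp hkE with rfl | h
        · exact absurd hzU hzUg
        · exact h
      -- k is contained in no bad interval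
      have hknotbad : ∀ a b : ℤ, Bad E a b → ¬ k ⊆ Set.Ico a b := by
        intro a b hbad hksub
        exact hbad.2.2 ⟨k, hkE, hksub, zU, hzU, fun h hh hs hz => huniqG h hh hz⟩
      -- pass to F' = F.erase k
      set F' := F.erase k with hF'
      have hEE' : E.erase k = insert g F' := by
        rw [hE, hF']
        apply Finset.erase_insert_of_ne
        intro hc
        exact hgF (hc ▸ hkF)
      have htransfer : ∀ a b : ℤ, Bad E a b → Bad (insert g F') a b := by
        intro a b hbad
        have hk : ¬ k ⊆ Set.Ico a b := hknotbad a b hbad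
        obtain ⟨hab, ⟨h₀, hh₀, hsub₀⟩, hnone⟩ := hbad
        refine ⟨hab, ⟨h₀, ?_, hsub₀⟩, ?_⟩
        · rw [← hEE']
          exact Finset.mem_erase.mpr ⟨fun hc => hk (hc ▸ hsub₀), hh₀⟩
        · intro honce
          obtain ⟨k', hk'E', hk's, y, hy, hu⟩ := honce
          refine hnone ⟨k', ?_, hk's, y, hy, ?_⟩
          · rw [← hEE'] at hk'E'
            exact Finset.mem_of_mem_erase hk'E'
          · intro h hh hs hyh
            have hhk : h ≠ k := fun hc => hk (hc ▸ hs)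
            have : h ∈ insert g F' := by
              rw [← hEE']
              exact Finset.mem_erase.mpr ⟨hhk, hh⟩
            exact hu h this hs hyh
        -- done transfer
      obtain ⟨z, f, hzg, hfF', hprops⟩ :=
        ih F' (Finset.erase_ssubset hkF)
          (fun h hh => hitvF h (Finset.mem_of_mem_erase hh))
          (fun hc => hgF (Finset.mem_of_mem_erase hc))
          (IR_subset hIRF (Finset.erase_subset _ _))
          ⟨a₀, b₀, htransfer a₀ b₀ hbad₀⟩
      refine ⟨z, f, hzg, Finset.mem_of_mem_erase hfF', ?_⟩
      intro a b hbad
      obtain ⟨h1, h2, h3⟩ := hprops a b (htransfer a b hbad)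
      refine ⟨h1, h2, ?_⟩
      intro h hh hs hz
      have hhk : h ≠ k := fun hc => (hknotbad a b hbad) (hc ▸ hs)
      exact h3 h (Finset.mem_erase.mpr ⟨hhk, hh⟩) hs hz
    · -- the hull is itself bad: pick a once-covered point of F inside the hull
      obtain ⟨f₀, hf₀⟩ := hFne
      obtain ⟨f, hfF, _, z, hzf, huniqFU⟩ :=
        hcritF A B hAB ⟨f₀, hf₀, hsub f₀ (Finset.mem_insert_of_mem hf₀)⟩
      have huniqFg : ∀ h ∈ F, z ∈ h → h = f := fun h hh hz =>
        huniqFU h hh (hsub h (Finset.mem_insert_of_mem hh)) hz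
      have hzg : z ∈ g := by
        by_contra hzg
        refine honceU ⟨f, Finset.mem_insert_of_mem hfF,
          hsub f (Finset.mem_insert_of_mem hfF), z, hzf, ?_⟩
        intro h hh hs hz
        rcases Finset.mem_insert.mp hh with rfl | hhF
        · exact absurd hz hzg
        · exact huniqFg h hhF hz
      refine ⟨z, f, hzg, hfF, ?_⟩
      intro a b hbad
      obtain ⟨f', hf'F, hf'sub, hzf'⟩ := bad_cover hcritF hgF hbad hzg
      have h1 : f' = f := huniqFg f' hf'F hzf'
      subst h1
      exact ⟨hf'sub, hzf', fun h hh hs hz => huniqFg h hh hz⟩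

end IrrAux

namespace IrrAux

/-- Removing the pivot `f` restores the criterion. -/
theorem crit_erase_pivot {F : Finset (Set ℤ)} {g : Set ℤ} (hg : IsItv g)
    (hitvF : ∀ f ∈ F, IsItv f) (hgF : g ∉ F) (hIRF : IR F)
    {z : ℤ} {f : Set ℤ} (hzg : z ∈ g) (hfF : f ∈ F)
    (hprop : ∀ a b : ℤ, Bad (insert g F) a b →
      (f ⊆ Set.Ico a b ∧ z ∈ f ∧ ∀ h ∈ F, h ⊆ Set.Ico a b → z ∈ h → h = f)) :
    Crit ((insert g F).erase f) := by
  set E := insert g F with hE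
  have hcritF : Crit F := crit_of_IR hIRF
  have hitvE : ∀ h ∈ E, IsItv h := by
    intro h hh
    rcases Finset.mem_insert.mp hh with rfl | hhF
    · exact hg
    · exact hitvF h hhF
  have hgf : g ≠ f := fun hc => hgF (hc ▸ hfF)
  intro a b hab ⟨w₀, hw₀, hw₀sub⟩
  set t := Set.Ico a b with ht
  have hw₀E : w₀ ∈ E := Finset.mem_of_mem_erase hw₀
  have hw₀f : w₀ ≠ f := Finset.ne_of_mem_erase hw₀
  by_cases honce : Once E t
  · obtain ⟨k₂, hk₂E, hk₂sub, z₂, hz₂, huniq₂⟩ := honce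
    by_cases hk₂f : k₂ = f
    · -- the unique once-covered witness is f itself: split t at z₂
      subst hk₂f
      have hz₂t : z₂ ∈ t := hk₂sub hz₂
      have hz₂t' := Set.mem_Ico.mp hz₂t
      have havoid : ∀ h ∈ E.erase k₂, h ⊆ t → z₂ ∉ h := by
        intro h hh hs hzh
        exact (Finset.ne_of_mem_erase hh) (huniq₂ h (Finset.mem_of_mem_erase hh) hs hzh)
      obtain ⟨α, β, hαβ, hw₀eq⟩ := hitvE w₀ hw₀E
      have hz₂w₀ : z₂ ∉ w₀ := havoid w₀ hw₀ hw₀sub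
      have hbounds : a ≤ α ∧ β ≤ b := by
        rw [hw₀eq] at hw₀sub
        exact (Set.Ico_subset_Ico_iff hαβ).mp hw₀sub
      have hcase : β ≤ z₂ ∨ z₂ < α := by
        by_contra hc
        push_neg at hc
        exact hz₂w₀ (hw₀eq ▸ Set.mem_Ico.mpr ⟨by omega, by omega⟩)
      -- σ is the side of t containing w₀
      rcases hcase with hcase | hcase
      · -- left side σ = Ico a z₂
        have haz : a < z₂ := by omega
        have hw₀σ : w₀ ⊆ Set.Ico a z₂ := by
          rw [hw₀eq]; exact Set.Ico_subset_Ico hbounds.1 hcase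
        have hσt : Set.Ico a z₂ ⊆ t := Set.Ico_subset_Ico le_rfl (by omega)
        -- σ is not bad for E
        have hnotbad : ¬ Bad E a z₂ := by
          intro hbadσ
          have h1 := (hprop a z₂ hbadσ).1
          have := Set.mem_Ico.mp (h1 hz₂)
          omega
        have honceσ : Once E (Set.Ico a z₂) := by
          by_contra hc
          exact hnotbad ⟨haz, ⟨w₀, hw₀E, hw₀σ⟩, hc⟩
        obtain ⟨k₃, hk₃E, hk₃σ, z₃, hz₃, huniq₃⟩ := honceσ
        have hk₃f : k₃ ≠ k₂ := by
          intro hc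
          have := Set.mem_Ico.mp (hk₃σ (hc ▸ hz₂))
          omega
        have hz₃σ := Set.mem_Ico.mp (hk₃σ hz₃)
        refine ⟨k₃, Finset.mem_erase.mpr ⟨hk₃f, hk₃E⟩, subset_trans hk₃σ hσt, z₃, hz₃, ?_⟩
        intro h hh hs hz₃h
        have hhE := Finset.mem_of_mem_erase hh
        have hz₂h : z₂ ∉ h := havoid h hh hs
        have : h ⊆ Set.Ico a z₂ := itv_left (hitvE h hhE) hs hz₂h hz₃h hz₃σ.2
        exact huniq₃ h hhE this hz₃h
      · -- right side σ = Ico (z₂+1) b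
        have hzb : z₂ + 1 < b := by omega
        have hw₀σ : w₀ ⊆ Set.Ico (z₂ + 1) b := by
          rw [hw₀eq]; exact Set.Ico_subset_Ico (by omega) hbounds.2
        have hσt : Set.Ico (z₂ + 1) b ⊆ t := Set.Ico_subset_Ico (by omega) le_rfl
        have hnotbad : ¬ Bad E (z₂ + 1) b := by
          intro hbadσ
          have h1 := (hprop _ _ hbadσ).1
          have := Set.mem_Ico.mp (h1 hz₂)
          omega
        have honceσ : Once E (Set.Ico (z₂ + 1) b) := by
          by_contra hc
          exact hnotbad ⟨hzb, ⟨w₀, hw₀E, hw₀σ⟩, hc⟩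
        obtain ⟨k₃, hk₃E, hk₃σ, z₃, hz₃, huniq₃⟩ := honceσ
        have hk₃f : k₃ ≠ k₂ := by
          intro hc
          have := Set.mem_Ico.mp (hk₃σ (hc ▸ hz₂))
          omega
        have hz₃σ := Set.mem_Ico.mp (hk₃σ hz₃)
        refine ⟨k₃, Finset.mem_erase.mpr ⟨hk₃f, hk₃E⟩, subset_trans hk₃σ hσt, z₃, hz₃, ?_⟩
        intro h hh hs hz₃h
        have hhE := Finset.mem_of_mem_erase hh
        have hz₂h : z₂ ∉ h := havoid h hh hs
        have : h ⊆ Set.Ico (z₂ + 1) b :=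
          itv_right (hitvE h hhE) hs hz₂h hz₃h (by omega)
        exact huniq₃ h hhE this hz₃h
    · -- the witness is not f : it survives
      exact ⟨k₂, Finset.mem_erase.mpr ⟨hk₂f, hk₂E⟩, hk₂sub, z₂, hz₂,
        fun h hh hs hzh => huniq₂ h (Finset.mem_of_mem_erase hh) hs hzh⟩
  · -- t is a bad interval for E : then g itself is the witness via z
    have hbadt : Bad E a b := ⟨hab, ⟨w₀, hw₀E, hw₀sub⟩, honce⟩
    obtain ⟨hfsub, hzf, huniqF⟩ := hprop a b hbadt
    have hgt : g ⊆ t := bad_contains_g hcritF hbadt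
    refine ⟨g, Finset.mem_erase.mpr ⟨hgf, Finset.mem_insert_self _ _⟩, hgt, z, hzg, ?_⟩
    intro h hh hs hzh
    have hhf := Finset.ne_of_mem_erase hh
    rcases Finset.mem_insert.mp (Finset.mem_of_mem_erase hh) with rfl | hhF
    · rfl
    · exact absurd (huniqF h hhF hs hzh) hhf

end IrrAux

namespace IrrAux

theorem exchange_main (F : Finset (Set ℤ)) (g : Set ℤ)
    (hF : ∀ f ∈ F, IsItv f) (hg : IsItv g) (hgF : g ∉ F)
    (hirr : Irredundant F) (hred : ¬ Irredundant (insert g F)) :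
    ∃ f ∈ F, f ≠ g ∧ Irredundant ((insert g F).erase f) := by
  classical
  have hIRF : IR F := IR_of_irredundant hirr
  have hitvE : ∀ h ∈ insert g F, IsItv h := by
    intro h hh
    rcases Finset.mem_insert.mp hh with rfl | hhF
    · exact hg
    · exact hF h hhF
  have hnotIRE : ¬ IR (insert g F) := fun h => hred (irredundant_of_IR h)
  have hncrit : ¬ Crit (insert g F) := fun hc => hnotIRE (IR_of_crit _ hitvE hc)
  have hexbad : ∃ a b : ℤ, Bad (insert g F) a b := by
    by_contra hc
    push_neg at hc
    apply hncrit
    intro a b hab hmem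
    by_contra honce
    exact (hc a b) ⟨hab, hmem, honce⟩
  obtain ⟨z, f, hzg, hfF, hprops⟩ := exists_pivot g hg F hF hgF hIRF hexbad
  have hcrit' : Crit ((insert g F).erase f) :=
    crit_erase_pivot hg hF hgF hIRF hzg hfF hprops
  have hitv' : ∀ h ∈ (insert g F).erase f, IsItv h := fun h hh =>
    hitvE h (Finset.mem_of_mem_erase hh)
  have hIR' : IR ((insert g F).erase f) := IR_of_crit _ hitv' hcrit'
  exact ⟨f, hfF, fun hc => hgF (hc ▸ hfF), irredundant_of_IR hIR'⟩

end IrrAux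

/-- If `F` is an irredundant family of intervals and `F ∪ {g}` is redundant for an
interval `g ∉ F`, then some `f ∈ F`, `f ≠ g`, can be exchanged:
`(F ∪ {g}) \ {f}` is irredundant. -/
theorem exchange_property (F : Finset (Set ℤ)) (g : Set ℤ)
    (hF : ∀ f ∈ F, IsItv f) (hg : IsItv g) (hgF : g ∉ F)
    (hirr : Irredundant F) (hred : ¬ Irredundant (insert g F)) :
    ∃ f ∈ F, f ≠ g ∧ Irredundant ((insert g F).erase f) :=
  IrrAux.exchange_main F g hF hg hgF hirr hred
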